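/- Let N be a binary normal network on X with no near-sibling and no near-stack reticulations, with reticulated cherry {a,b} (reticulation leaf b), and let g_b be the grandparent of b not equal to the parent of a. If c is in V_{g_b} and N displays ac|x for all x in X - (V_{g_b} ∪ {a,b}), then N displays neither ax|c nor ax|b for any x in X - (V_{g_b} ∪ {a,b}). -/

import Mathlib

/-- A (candidate) rooted phylogenetic network structure: a directed graph on a
vertex type `V` with a distinguished root and a labelling of (intended) leaves
by elements of `X`.  The combinatorial axioms are imposed by predicates below. -/
structure Network (X : Type) where
  V : Type
  arc : V → V → Prop
  root : V
  leaf : X → V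

namespace Network

variable {X : Type} (N : Network X)

def parents (v : N.V) : Set N.V := {u | N.arc u v}

def children (u : N.V) : Set N.V := {v | N.arc u v}

/-- in-degree 1, out-degree 2 -/
def IsTreeVertex (v : N.V) : Prop := (N.parents v).ncard = 1 ∧ (N.children v).ncard = 2

/-- in-degree 2, out-degree 1 -/
def IsRetic (v : N.V) : Prop := (N.parents v).ncard = 2 ∧ (N.children v).ncard = 1

/-- in-degree 1, out-degree 0 -/
def IsLeafVertex (v : N.V) : Prop := (N.parents v).ncard = 1 ∧ (N.children v).ncard = 0

def Acyclic : Prop := ∀ v : N.V, ¬ Relation.TransGen N.arc v v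

/-- A well-formed binary phylogenetic network (non-degenerate case): a finite
acyclic digraph with a root of in-degree 0 and out-degree 2, leaves of
in-degree 1 and out-degree 0 bijectively labelled by `X`, and all remaining
vertices tree vertices or reticulations. -/
def Wf : Prop :=
  Finite N.V ∧ N.Acyclic ∧
  (N.parents N.root).ncard = 0 ∧ (N.children N.root).ncard = 2 ∧
  Function.Injective N.leaf ∧
  (∀ x : X, N.IsLeafVertex (N.leaf x)) ∧
  (∀ v : N.V, v = N.root ∨ (∃ x, N.leaf x = v) ∨ N.IsTreeVertex v ∨ N.IsRetic v)

/-- The degenerate network on a single leaf: one vertex, no arcs. -/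
def Degenerate : Prop :=
  (∀ v : N.V, v = N.root) ∧ (∀ u v : N.V, ¬ N.arc u v) ∧
  (∃! _x : X, True) ∧ (∀ x : X, N.leaf x = N.root)

def IsBinaryPhylo : Prop := N.Wf ∨ N.Degenerate

/-- `l` is a directed path (a list of successively adjacent vertices) from `u` to `v`. -/
def IsPathFromTo (l : List N.V) (u v : N.V) : Prop :=
  l.Chain' N.arc ∧ l.head? = some u ∧ l.getLast? = some v

/-- `v` is a descendant of `u` (equivalently, `u` is an ancestor of `v`). -/
def Desc (u v : N.V) : Prop := Relation.ReflTransGen N.arc u v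

/-- The visibility set of `u`: those leaf labels `x` such that every directed
path from the root to the leaf labelled `x` traverses `u`. -/
def visSet (u : N.V) : Set X :=
  {x | ∀ l : List N.V, N.IsPathFromTo l N.root (N.leaf x) → u ∈ l}

/-- The cluster set of `u`: leaf labels of leaves that are descendants of `u`. -/
def cluster (u : N.V) : Set X := {x | N.Desc u (N.leaf x)}

/-- A tree path from `u` to `t`: a directed path whose vertices other than the
endpoints are tree vertices. -/
def IsTreePath (l : List N.V) (u t : N.V) : Prop :=
  N.IsPathFromTo l u t ∧ ∀ v ∈ l, v ≠ u → v ≠ t → N.IsTreeVertex v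

/-- Tree-child: every vertex with a child has a child that is a tree vertex or a leaf. -/
def TreeChild : Prop :=
  ∀ v : N.V, (∃ c, N.arc v c) → ∃ c, N.arc v c ∧ (N.IsTreeVertex c ∨ N.IsLeafVertex c)

/-- Some reticulation arc `(u,v)` is a shortcut: there is a directed path from
`u` to `v` avoiding the arc `(u,v)`. -/
def HasShortcut : Prop :=
  ∃ u v, N.arc u v ∧ N.IsRetic v ∧ ∃ w, N.arc u w ∧ w ≠ v ∧ N.Desc w v

/-- Normal: tree-child with no shortcuts. -/
def IsNormal : Prop := N.TreeChild ∧ ¬ N.HasShortcut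

def SiblingRetics (u v : N.V) : Prop :=
  u ≠ v ∧ N.IsRetic u ∧ N.IsRetic v ∧ ∃ p, N.arc p u ∧ N.arc p v

def StackRetics (u v : N.V) : Prop :=
  N.IsRetic u ∧ N.IsRetic v ∧ N.arc u v

/-- `u` and `v` are near-sibling reticulations: some tree vertex `t` has as its
two children `v` and a tree vertex `s` that is a parent of `u`. -/
def NearSiblingRetics (u v : N.V) : Prop :=
  u ≠ v ∧ N.IsRetic u ∧ N.IsRetic v ∧
  ∃ t s, N.IsTreeVertex t ∧ N.IsTreeVertex s ∧ N.arc t s ∧ N.arc t v ∧ N.arc s u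

/-- `u` and `v` are near-stack reticulations: the child of `u` is a tree vertex
that is a parent of `v`. -/
def NearStackRetics (u v : N.V) : Prop :=
  N.IsRetic u ∧ N.IsRetic v ∧ ∃ s, N.arc u s ∧ N.IsTreeVertex s ∧ N.arc s v

def NoNearRetics : Prop :=
  (∀ u v, ¬ N.NearSiblingRetics u v) ∧ (∀ u v, ¬ N.NearStackRetics u v)

/-- `{a,b}` is a cherry: the leaves labelled `a` and `b` share a parent. -/
def Cherry (a b : X) : Prop :=
  a ≠ b ∧ ∃ p, N.arc p (N.leaf a) ∧ N.arc p (N.leaf b)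

/-- `{a,b}` is a reticulated cherry with reticulation leaf `b`. -/
def ReticCherry (a b : X) : Prop :=
  a ≠ b ∧ ∃ pa pb, N.arc pa (N.leaf a) ∧ N.arc pb (N.leaf b) ∧
    N.IsRetic pb ∧ N.arc pa pb

/-- `N` displays the rooted triple `xy|z`: there is a subdigraph of `N` that
is a subdivision of the rooted triple tree with `z` adjacent to the root,
i.e. vertices `p` (the root image) and `q` (the image of the parent of `x,y`)
together with internally disjoint directed paths as below. -/
def Displays (x y z : X) : Prop :=
  x ≠ y ∧ x ≠ z ∧ y ≠ z ∧
  ∃ (p q : N.V) (l0 lx ly lz : List N.V),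
    p ≠ q ∧
    N.IsPathFromTo l0 p q ∧
    N.IsPathFromTo lx q (N.leaf x) ∧
    N.IsPathFromTo ly q (N.leaf y) ∧
    N.IsPathFromTo lz p (N.leaf z) ∧
    (∀ v ∈ lx, v ∈ ly → v = q) ∧
    (∀ v ∈ l0, v ∈ lx ∨ v ∈ ly → v = q) ∧
    (∀ v ∈ lz, v ∈ l0 ∨ v ∈ lx ∨ v ∈ ly → v = p)

/-- `R(N)`: the set of rooted triples displayed by `N`, encoded as ordered
triples `(x, y, z)` standing for `xy|z`. -/
def RDisp : Set (X × X × X) := {t | N.Displays t.1 t.2.1 t.2.2}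

/-- Isomorphism of networks on the same leaf set: a digraph isomorphism fixing
each leaf label. -/
def Isomorphic (N1 N2 : Network X) : Prop :=
  ∃ φ : N1.V ≃ N2.V,
    (∀ u v, N1.arc u v ↔ N2.arc (φ u) (φ v)) ∧ (∀ x, φ (N1.leaf x) = N2.leaf x)

/-- A candidate set for `b` (relative to `a`): a non-empty subset
`W ⊆ X - {a,b}` satisfying conditions (W1)–(W5). -/
def CandidateSet (a b : X) (W : Set X) : Prop :=
  W.Nonempty ∧ a ∉ W ∧ b ∉ W ∧
  -- (W1)
  (∀ c ∈ W, ∀ x : X, x ∉ W → x ≠ b →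
    N.Displays b c x ∧ ¬ N.Displays a c b) ∧
  -- (W2)
  (∀ c ∈ W, ∀ c' ∈ W, c ≠ c' → ¬ N.Displays b c c') ∧
  -- (W3)
  (∀ c ∈ W, ∀ x : X, x ∉ W → x ≠ a → x ≠ b →
    (N.Displays c x a ↔ N.Displays b x a)) ∧
  -- (W4)
  (∀ x y : X, x ∉ W → x ≠ a → x ≠ b → y ∉ W → y ≠ a → y ≠ b →
    N.Displays b x y → ¬ N.Displays a x y → ∀ c ∈ W, N.Displays c x y) ∧
  -- (W5)
  (∀ c ∈ W, (∀ x : X, x ∉ W → x ≠ a → x ≠ b → N.Displays a c x) →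
    ∀ x : X, x ∉ W → x ≠ a → x ≠ b → ¬ N.Displays a x c ∧ ¬ N.Displays a x b)

end Network

namespace Network

variable {X : Type} {N : Network X}

private lemma getLast?_mem' : ∀ (l : List N.V) (a : N.V), l.getLast? = some a → a ∈ l := by
  intro l
  induction l with
  | nil => intro a h; simp at h
  | cons b t ih =>
    intro a h
    cases t with
    | nil =>
      have hb : b = a := by simpa using h
      simp [hb]
    | cons c t' =>
      rw [List.getLast?_cons_cons] at h
      exact List.mem_cons_of_mem _ (ih a h)

lemma path_nonempty {l : List N.V} {u v : N.V} (h : N.IsPathFromTo l u v) : l ≠ [] := by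
  rintro rfl; simp [IsPathFromTo] at h

lemma head_mem_path {l : List N.V} {u v : N.V} (h : N.IsPathFromTo l u v) : u ∈ l := by
  cases l with
  | nil => simp [IsPathFromTo] at h
  | cons a t =>
    have : a = u := by simpa using h.2.1
    simp [this]

lemma last_mem_path {l : List N.V} {u v : N.V} (h : N.IsPathFromTo l u v) : v ∈ l :=
  getLast?_mem' l v h.2.2

private lemma desc_of_chain_mem : ∀ (t : List N.V) (u w : N.V),
    List.Chain' N.arc (u :: t) → w ∈ u :: t → N.Desc u w := by
  intro t
  induction t with
  | nil =>
    intro u w _ hw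
    have : w = u := by simpa using hw
    subst this; exact Relation.ReflTransGen.refl
  | cons b t' ih =>
    intro u w hch hw
    rcases List.mem_cons.mp hw with rfl | hw'
    · exact Relation.ReflTransGen.refl
    · have h1 := List.isChain_cons_cons.mp hch
      exact Relation.ReflTransGen.head h1.1 (ih b w h1.2 hw')

lemma desc_head_mem {l : List N.V} {u v w : N.V} (h : N.IsPathFromTo l u v) (hw : w ∈ l) :
    N.Desc u w := by
  cases l with
  | nil => simp [IsPathFromTo] at h
  | cons a t =>
    have ha : a = u := by simpa using h.2.1
    subst ha
    exact desc_of_chain_mem t a w h.1 hw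

private lemma desc_chain_last : ∀ (t : List N.V) (u v w : N.V), List.Chain' N.arc (u :: t) →
    (u :: t).getLast? = some v → w ∈ u :: t → N.Desc w v := by
  intro t
  induction t with
  | nil =>
    intro u v w _ hl hw
    have h1 : u = v := by simpa using hl
    have h2 : w = u := by simpa using hw
    subst h1; subst h2; exact Relation.ReflTransGen.refl
  | cons b t' ih =>
    intro u v w hch hl hw
    have h1 := List.isChain_cons_cons.mp hch
    rw [List.getLast?_cons_cons] at hl
    rcases List.mem_cons.mp hw with rfl | hw'
    · exact Relation.ReflTransGen.head h1.1 (ih b v b h1.2 hl (List.mem_cons_self))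
    · exact ih b v w h1.2 hl hw'

lemma desc_last_mem {l : List N.V} {u v w : N.V} (h : N.IsPathFromTo l u v) (hw : w ∈ l) :
    N.Desc w v := by
  cases l with
  | nil => simp [IsPathFromTo] at h
  | cons a t => exact desc_chain_last t a v w h.1 h.2.2 hw

lemma desc_of_path {l : List N.V} {u v : N.V} (h : N.IsPathFromTo l u v) : N.Desc u v :=
  desc_last_mem h (head_mem_path h)

private lemma succ_chain : ∀ (t : List N.V) (b v w : N.V), List.Chain' N.arc (b :: t) →
    (b :: t).getLast? = some v → w ∈ b :: t → w ≠ v → ∃ z, z ∈ b :: t ∧ N.arc w z := by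
  intro t
  induction t with
  | nil =>
    intro b v w _ hl hw hne
    have h1 : w = b := by simpa using hw
    have h2 : b = v := by simpa using hl
    exact absurd (h1.trans h2) hne
  | cons c t' ih =>
    intro b v w hch hl hw hne
    have h1 := List.isChain_cons_cons.mp hch
    rw [List.getLast?_cons_cons] at hl
    rcases List.mem_cons.mp hw with rfl | hw'
    · exact ⟨c, List.mem_cons_of_mem _ (List.mem_cons_self), h1.1⟩
    · obtain ⟨z, hz1, hz2⟩ := ih c v w h1.2 hl hw' hne
      exact ⟨z, List.mem_cons_of_mem _ hz1, hz2⟩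

lemma succ_of_mem {l : List N.V} {u v w : N.V} (h : N.IsPathFromTo l u v) (hw : w ∈ l)
    (hne : w ≠ v) : ∃ z, z ∈ l ∧ N.arc w z := by
  cases l with
  | nil => simp at hw
  | cons b t => exact succ_chain t b v w h.1 h.2.2 hw hne

private lemma pred_chain : ∀ (t : List N.V) (b w : N.V), List.Chain' N.arc (b :: t) →
    w ∈ b :: t → w ≠ b → ∃ z, z ∈ b :: t ∧ N.arc z w := by
  intro t
  induction t with
  | nil =>
    intro b w _ hw hne
    have : w = b := by simpa using hw
    exact absurd this hne
  | cons c t' ih =>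
    intro b w hch hw hne
    have h1 := List.isChain_cons_cons.mp hch
    rcases List.mem_cons.mp hw with rfl | hw'
    · exact absurd rfl hne
    · by_cases hwc : w = c
      · subst hwc; exact ⟨b, List.mem_cons_self, h1.1⟩
      · obtain ⟨z, hz1, hz2⟩ := ih c w h1.2 hw' hwc
        exact ⟨z, List.mem_cons_of_mem _ hz1, hz2⟩

lemma pred_of_mem {l : List N.V} {u v w : N.V} (h : N.IsPathFromTo l u v) (hw : w ∈ l)
    (hne : w ≠ u) : ∃ z, z ∈ l ∧ N.arc z w := by
  cases l with
  | nil => simp at hw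
  | cons b t =>
    have hb : b = u := by simpa using h.2.1
    subst hb
    exact pred_chain t b w h.1 hw hne

lemma single_path (u : N.V) : N.IsPathFromTo [u] u u :=
  ⟨List.isChain_singleton u, rfl, rfl⟩

lemma pair_path {u v : N.V} (h : N.arc u v) : N.IsPathFromTo [u, v] u v :=
  ⟨List.isChain_pair.mpr h, rfl, rfl⟩

private lemma getLast?_cons_ne {a : N.V} {l : List N.V} (h : l ≠ []) :
    (a :: l).getLast? = l.getLast? := by
  cases l with
  | nil => exact absurd rfl h
  | cons c t => exact List.getLast?_cons_cons


lemma path_append' {l m : List N.V} {u v w : N.V} (hl : N.IsPathFromTo l u v)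
    (hm : N.IsPathFromTo m v w) : N.IsPathFromTo (l ++ m.tail) u w := by
  cases m with
  | nil => simp [IsPathFromTo] at hm
  | cons c t =>
    have hc : c = v := by simpa using hm.2.1
    subst hc
    cases t with
    | nil =>
      have hcw : c = w := by simpa using hm.2.2
      subst hcw
      simpa using hl
    | cons d t' =>
      have h1 := List.isChain_cons_cons.mp hm.1
      obtain ⟨hch, hh, hlast⟩ := hl
      simp only [List.tail_cons]
      refine ⟨?_, ?_, ?_⟩
      · refine List.IsChain.append hch h1.2 ?_
        intro x hx y hy
        have hx' : x = c := by
          rw [Option.mem_def, hlast] at hx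
          exact (Option.some_inj.mp hx).symm
        have hy' : d = y := by
          rw [Option.mem_def] at hy
          simpa using hy
        rw [hx', ← hy']
        exact h1.1
      · cases l with
        | nil => simp at hh
        | cons e l₀ => simpa using hh
      · rw [List.getLast?_append_of_ne_nil l (List.cons_ne_nil _ _)]
        have := hm.2.2
        rwa [List.getLast?_cons_cons] at this

lemma path_snoc {l : List N.V} {u v w : N.V} (h : N.IsPathFromTo l u v) (harc : N.arc v w) :
    N.IsPathFromTo (l ++ [w]) u w :=
  path_append' h (pair_path harc)

lemma path_of_desc {u v : N.V} (h : N.Desc u v) : ∃ l, N.IsPathFromTo l u v := by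
  induction h with
  | refl => exact ⟨[u], single_path u⟩
  | tail _ harc ih =>
    obtain ⟨l, hl⟩ := ih
    exact ⟨l ++ [_], path_snoc hl harc⟩

private lemma cons_path {b c : N.V} {l : List N.V} {v : N.V} (harc : N.arc b c)
    (h : N.IsPathFromTo (c :: l) c v) : N.IsPathFromTo (b :: c :: l) b v := by
  obtain ⟨hch, _, hlast⟩ := h
  exact ⟨List.isChain_cons_cons.mpr ⟨harc, hch⟩, rfl, by rw [List.getLast?_cons_cons]; exact hlast⟩

lemma prefix_path : ∀ (l : List N.V) (u v w : N.V), N.IsPathFromTo l u v → w ∈ l →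
    ∃ l', N.IsPathFromTo l' u w ∧ ∀ z ∈ l', z ∈ l := by
  intro l
  induction l with
  | nil => intro u v w _ hw; simp at hw
  | cons b t ih =>
    intro u v w h hw
    have hb : b = u := by simpa using h.2.1
    subst hb
    rcases List.mem_cons.mp hw with rfl | hw'
    · refine ⟨[w], single_path w, ?_⟩
      intro z hz
      have : z = w := by simpa using hz
      simp [this]
    · cases t with
      | nil => simp at hw'
      | cons c t' =>
        have h1 := List.isChain_cons_cons.mp h.1
        have hpath : N.IsPathFromTo (c :: t') c v :=
          ⟨h1.2, rfl, by have := h.2.2; rwa [List.getLast?_cons_cons] at this⟩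
        obtain ⟨l', hl', hsub⟩ := ih c v w hpath hw'
        cases l' with
        | nil => exact absurd rfl (path_nonempty hl')
        | cons c₀ t₀ =>
          have hc₀ : c₀ = c := by simpa using hl'.2.1
          subst hc₀
          refine ⟨b :: c₀ :: t₀, cons_path h1.1 hl', ?_⟩
          intro z hz
          rcases List.mem_cons.mp hz with rfl | hz'
          · exact List.mem_cons_self
          · exact List.mem_cons_of_mem _ (hsub z hz')

lemma path_decomp {l : List N.V} {u t : N.V} (h : N.IsPathFromTo l u t) (hne : t ≠ u) :
    ∃ l' w, N.IsPathFromTo l' u w ∧ N.arc w t ∧ ∀ z ∈ l', z ∈ l := by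
  obtain ⟨hch, hh, hlast⟩ := h
  have hlne : l ≠ [] := by rintro rfl; simp at hh
  have hgl : l.getLast hlne = t := by
    have h2 := List.getLast?_eq_getLast_of_ne_nil hlne
    rw [hlast] at h2
    exact (Option.some_inj.mp h2).symm
  have hsplit : l.dropLast ++ [t] = l := by
    rw [← hgl]; exact List.dropLast_append_getLast hlne
  have hl₀ne : l.dropLast ≠ [] := by
    intro h0
    rw [h0, List.nil_append] at hsplit
    rw [← hsplit] at hh
    have : t = u := by simpa using hh
    exact hne this
  have hch' : List.Chain' N.arc (l.dropLast ++ [t]) := by rw [hsplit]; exact hch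
  obtain ⟨hch₀, _, hlink⟩ := List.isChain_append.mp hch'
  refine ⟨l.dropLast, l.dropLast.getLast hl₀ne, ⟨hch₀, ?_, ?_⟩, ?_, ?_⟩
  · rw [← hsplit] at hh
    cases hd : l.dropLast with
    | nil => exact absurd hd hl₀ne
    | cons e l₀ =>
      rw [hd] at hh
      simpa using hh
  · exact List.getLast?_eq_getLast_of_ne_nil hl₀ne
  · refine hlink _ ?_ t ?_
    · rw [Option.mem_def]
      exact List.getLast?_eq_getLast_of_ne_nil hl₀ne
    · rw [Option.mem_def]; rfl
  · intro z hz
    rw [← hsplit]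
    exact List.mem_append_left _ hz

end Network

/-- Lemma (vi): for a reticulated cherry `{a,b}` with reticulation leaf `b` in
a binary normal network `N` with no near-sibling and no near-stack
reticulations, with `g_b` the grandparent of `b` other than the parent `p_a` of
`a`: if `c ∈ V_{g_b}` and `N` displays `ac|x` for all
`x ∈ X - (V_{g_b} ∪ {a,b})`, then `N` displays neither `ax|c` nor `ax|b` for
any `x ∈ X - (V_{g_b} ∪ {a,b})`. -/
theorem vgb_property_vi {X : Type} (N : Network X)
    (h : N.IsBinaryPhylo) (hn : N.IsNormal) (hnear : N.NoNearRetics)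
    (a b : X) (hab : a ≠ b) (pa pb gb : N.V)
    (hpa : N.arc pa (N.leaf a)) (hpb : N.arc pb (N.leaf b))
    (hretic : N.IsRetic pb) (hpapb : N.arc pa pb) (hgbpb : N.arc gb pb)
    (hgbpa : gb ≠ pa) :
    ∀ c ∈ N.visSet gb,
      (∀ x : X, x ∉ N.visSet gb → x ≠ a → x ≠ b → N.Displays a c x) →
      ∀ x : X, x ∉ N.visSet gb → x ≠ a → x ≠ b →
        ¬ N.Displays a x c ∧ ¬ N.Displays a x b := by
  intro c hc hd x hxv hxa hxb
  -- N is well-formed (not degenerate, since it has an arc)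
  have hWf : N.Wf := by
    rcases h with h' | h'
    · exact h'
    · exact absurd hpa (h'.2.1 pa (N.leaf a))
  obtain ⟨hfin, hacy, hrin, hrout, hinj, hleafv, hclass⟩ := hWf
  haveI : Finite N.V := hfin
  -- basic cardinality helpers
  have uniqP : ∀ {v u u' : N.V}, (N.parents v).ncard = 1 → N.arc u v → N.arc u' v → u' = u := by
    intro v u u' h1 hu hu'
    obtain ⟨z, hz⟩ := Set.ncard_eq_one.mp h1
    have e1 : u = z := by
      have hm : u ∈ N.parents v := hu
      rw [hz] at hm; exact Set.mem_singleton_iff.mp hm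
    have e2 : u' = z := by
      have hm : u' ∈ N.parents v := hu'
      rw [hz] at hm; exact Set.mem_singleton_iff.mp hm
    rw [e1, e2]
  have uniqC : ∀ {v u u' : N.V}, (N.children v).ncard = 1 → N.arc v u → N.arc v u' → u' = u := by
    intro v u u' h1 hu hu'
    obtain ⟨z, hz⟩ := Set.ncard_eq_one.mp h1
    have e1 : u = z := by
      have hm : u ∈ N.children v := hu
      rw [hz] at hm; exact Set.mem_singleton_iff.mp hm
    have e2 : u' = z := by
      have hm : u' ∈ N.children v := hu'
      rw [hz] at hm; exact Set.mem_singleton_iff.mp hm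
    rw [e1, e2]
  have pairC : ∀ {v a₁ b₁ : N.V}, (N.children v).ncard = 2 → N.arc v a₁ → N.arc v b₁ → a₁ ≠ b₁ →
      ∀ z, N.arc v z → z = a₁ ∨ z = b₁ := by
    intro v a₁ b₁ h2 ha hb hne z hz
    obtain ⟨x₁, x₂, hx, hset⟩ := Set.ncard_eq_two.mp h2
    have ma : a₁ = x₁ ∨ a₁ = x₂ := by
      have hm : a₁ ∈ N.children v := ha
      rw [hset] at hm; simpa using hm
    have mb : b₁ = x₁ ∨ b₁ = x₂ := by
      have hm : b₁ ∈ N.children v := hb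
      rw [hset] at hm; simpa using hm
    have mz : z = x₁ ∨ z = x₂ := by
      have hm : z ∈ N.children v := hz
      rw [hset] at hm; simpa using hm
    rcases ma with rfl | rfl <;> rcases mb with rfl | rfl <;> rcases mz with rfl | rfl <;> tauto
  have pairP : ∀ {v a₁ b₁ : N.V}, (N.parents v).ncard = 2 → N.arc a₁ v → N.arc b₁ v → a₁ ≠ b₁ →
      ∀ z, N.arc z v → z = a₁ ∨ z = b₁ := by
    intro v a₁ b₁ h2 ha hb hne z hz
    obtain ⟨x₁, x₂, hx, hset⟩ := Set.ncard_eq_two.mp h2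
    have ma : a₁ = x₁ ∨ a₁ = x₂ := by
      have hm : a₁ ∈ N.parents v := ha
      rw [hset] at hm; simpa using hm
    have mb : b₁ = x₁ ∨ b₁ = x₂ := by
      have hm : b₁ ∈ N.parents v := hb
      rw [hset] at hm; simpa using hm
    have mz : z = x₁ ∨ z = x₂ := by
      have hm : z ∈ N.parents v := hz
      rw [hset] at hm; simpa using hm
    rcases ma with rfl | rfl <;> rcases mb with rfl | rfl <;> rcases mz with rfl | rfl <;> tauto
  have otherC : ∀ {v a₁ : N.V}, (N.children v).ncard = 2 → N.arc v a₁ →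
      ∃ b₁, N.arc v b₁ ∧ b₁ ≠ a₁ ∧ ∀ z, N.arc v z → z = a₁ ∨ z = b₁ := by
    intro v a₁ h2 ha
    obtain ⟨x₁, x₂, hx, hset⟩ := Set.ncard_eq_two.mp h2
    have hx₁ : N.arc v x₁ := by
      have : x₁ ∈ N.children v := by rw [hset]; exact Set.mem_insert _ _
      exact this
    have hx₂ : N.arc v x₂ := by
      have : x₂ ∈ N.children v := by rw [hset]; exact Set.mem_insert_of_mem _ rfl
      exact this
    have ma : a₁ = x₁ ∨ a₁ = x₂ := by
      have hm : a₁ ∈ N.children v := ha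
      rw [hset] at hm; simpa using hm
    have allz : ∀ z, N.arc v z → z = x₁ ∨ z = x₂ := by
      intro z hz
      have hm : z ∈ N.children v := hz
      rw [hset] at hm; simpa using hm
    rcases ma with rfl | rfl
    · exact ⟨x₂, hx₂, Ne.symm hx, fun z hz => allz z hz⟩
    · refine ⟨x₁, hx₁, hx, fun z hz => ?_⟩
      rcases allz z hz with h' | h'
      · exact Or.inr h'
      · exact Or.inl h'
  have emptyC : ∀ {v : N.V}, (N.children v).ncard = 0 → ∀ z, ¬ N.arc v z := by
    intro v h0 z hz
    have he : N.children v = ∅ := (Set.ncard_eq_zero (Set.toFinite _)).mp h0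
    have hm : z ∈ N.children v := hz
    rw [he] at hm
    exact hm
  have childless : ∀ (y : X) (z : N.V), ¬ N.arc (N.leaf y) z := fun y => emptyC (hleafv y).2
  have noRootParent : ∀ z, ¬ N.arc z N.root := by
    intro z hz
    have he : N.parents N.root = ∅ := (Set.ncard_eq_zero (Set.toFinite _)).mp hrin
    have hm : z ∈ N.parents N.root := hz
    rw [he] at hm
    exact hm
  have parent_exists : ∀ v : N.V, v ≠ N.root → ∃ u, N.arc u v := by
    intro v hv
    have onecase : (N.parents v).ncard = 1 → ∃ u, N.arc u v := by
      intro h1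
      obtain ⟨z, hz⟩ := Set.ncard_eq_one.mp h1
      refine ⟨z, ?_⟩
      have : z ∈ N.parents v := by rw [hz]; exact rfl
      exact this
    rcases hclass v with rfl | ⟨y, hy⟩ | ht | hr
    · exact absurd rfl hv
    · exact onecase (by rw [← hy]; exact (hleafv y).1)
    · exact onecase ht.1
    · obtain ⟨x₁, x₂, _, hset⟩ := Set.ncard_eq_two.mp hr.1
      refine ⟨x₁, ?_⟩
      have : x₁ ∈ N.parents v := by rw [hset]; exact Set.mem_insert _ _
      exact this
  have irr : ∀ v : N.V, ¬ N.arc v v := fun v hv => hacy v (Relation.TransGen.single hv)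
  have antisym : ∀ {u v : N.V}, N.Desc u v → N.Desc v u → u = v := by
    intro u v h1 h2
    by_contra hne
    rcases h1.cases_head with he | ⟨c', hc', hd'⟩
    · exact hne he
    · exact hacy u (Relation.TransGen.head' hc' (hd'.trans h2))
  have wf_anc : WellFounded (fun u v : N.V => Relation.TransGen N.arc u v) := by
    letI : IsTrans N.V (fun u v : N.V => Relation.TransGen N.arc u v) :=
      ⟨fun _ _ _ h1 h2 => h1.trans h2⟩
    letI : IsIrrefl N.V (fun u v : N.V => Relation.TransGen N.arc u v) :=
      ⟨fun v hv => hacy v hv⟩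
    exact Finite.wellFounded_of_trans_of_irrefl _
  have wf_desc : WellFounded (fun u v : N.V => Relation.TransGen N.arc v u) := by
    letI : IsTrans N.V (fun u v : N.V => Relation.TransGen N.arc v u) :=
      ⟨fun _ _ _ h1 h2 => h2.trans h1⟩
    letI : IsIrrefl N.V (fun u v : N.V => Relation.TransGen N.arc v u) :=
      ⟨fun v hv => hacy v hv⟩
    exact Finite.wellFounded_of_trans_of_irrefl _
  have reach : ∀ v : N.V, ∃ l, N.IsPathFromTo l N.root v := by
    intro v
    refine WellFounded.induction wf_anc
      (C := fun v => ∃ l, N.IsPathFromTo l N.root v) v ?_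
    intro w IH
    by_cases hw : w = N.root
    · subst hw; exact ⟨[N.root], Network.single_path _⟩
    · obtain ⟨u, hu⟩ := parent_exists w hw
      obtain ⟨l, hl⟩ := IH u (Relation.TransGen.single hu)
      exact ⟨l ++ [w], Network.path_snoc hl hu⟩
  -- structural facts about the reticulated cherry
  have pbchild : ∀ z, N.arc pb z → z = N.leaf b := fun z hz => uniqC hretic.2 hpb hz
  have Aparent : ∀ z, N.arc z (N.leaf a) → z = pa := fun z hz => uniqP (hleafv a).1 hpa hz
  have Bparent : ∀ z, N.arc z (N.leaf b) → z = pb := fun z hz => uniqP (hleafv b).1 hpb hz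
  have pbparent : ∀ z, N.arc z pb → z = pa ∨ z = gb :=
    pairP hretic.1 hpapb hgbpb (Ne.symm hgbpa)
  have hApb : N.leaf a ≠ pb := by
    intro e
    exact childless a (N.leaf b) (by rw [e]; exact hpb)
  have hpaclass : pa = N.root ∨ N.IsTreeVertex pa := by
    rcases hclass pa with h' | ⟨y, hy⟩ | h' | h'
    · exact Or.inl h'
    · exact absurd (by rw [hy]; exact hpa) (childless y (N.leaf a))
    · exact Or.inr h'
    · exfalso
      have := uniqC h'.2 hpa hpapb
      exact hApb this.symm
  have hpach2 : (N.children pa).ncard = 2 := by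
    rcases hpaclass with h' | h'
    · rw [h']; exact hrout
    · exact h'.2
  have pachild : ∀ z, N.arc pa z → z = N.leaf a ∨ z = pb := pairC hpach2 hpa hpapb hApb
  have descB : ∀ v, N.Desc (N.leaf b) v → v = N.leaf b := by
    intro v hv
    rcases hv.cases_head with he | ⟨c', hc', _⟩
    · exact he.symm
    · exact absurd hc' (childless b c')
  have descA : ∀ v, N.Desc (N.leaf a) v → v = N.leaf a := by
    intro v hv
    rcases hv.cases_head with he | ⟨c', hc', _⟩
    · exact he.symm
    · exact absurd hc' (childless a c')
  have descpb : ∀ v, N.Desc pb v → v = pb ∨ v = N.leaf b := by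
    intro v hv
    rcases hv.cases_head with he | ⟨c', hc', hd⟩
    · exact Or.inl he.symm
    · have hcb' := pbchild c' hc'
      rw [hcb'] at hd
      exact Or.inr (descB v hd)
  have descpa : ∀ v, N.Desc pa v → v = pa ∨ v = N.leaf a ∨ v = pb ∨ v = N.leaf b := by
    intro v hv
    rcases hv.cases_head with he | ⟨c', hc', hd⟩
    · exact Or.inl he.symm
    · rcases pachild c' hc' with rfl | rfl
      · exact Or.inr (Or.inl (descA v hd))
      · rcases descpb v hd with h' | h'
        · exact Or.inr (Or.inr (Or.inl h'))
        · exact Or.inr (Or.inr (Or.inr h'))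
  have gbtree : N.IsTreeVertex gb ∨ gb = N.root := by
    rcases hclass gb with h' | ⟨y, hy⟩ | h' | h'
    · exact Or.inr h'
    · exact absurd (by rw [hy]; exact hgbpb) (childless y pb)
    · exact Or.inl h'
    · exfalso
      obtain ⟨cc, hgc, hcase⟩ := hn.1 gb ⟨pb, hgbpb⟩
      have hccpb : cc = pb := uniqC h'.2 hgbpb hgc
      subst hccpb
      rcases hcase with ht' | hl'
      · have h1 := ht'.1
        have h2 := hretic.1
        omega
      · exact emptyC hl'.2 (N.leaf b) hpb
  have hgbch2 : (N.children gb).ncard = 2 := by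
    rcases gbtree with h' | h'
    · exact h'.2
    · rw [h']; exact hrout
  have hK3 : ¬ N.Desc gb pa := by
    intro hdes
    rcases hdes.cases_head with he | ⟨w, hw, hwpa⟩
    · exact hgbpa he
    · obtain ⟨s, hgbs, hsne, hpairgb⟩ := otherC hgbch2 hgbpb
      rcases hpairgb w hw with e1 | e1
      · rw [e1] at hwpa
        rcases descpb pa hwpa with e | e
        · exact irr pb (by rw [e] at hpapb; exact hpapb)
        · exact childless b (N.leaf a) (by rw [← e]; exact hpa)
      · rw [e1] at hwpa
        exact hn.2 ⟨gb, pb, hgbpb, hretic, s, hgbs, hsne,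
          Relation.ReflTransGen.tail hwpa hpapb⟩
  have hgbA : gb ≠ N.leaf a := by
    intro e
    exact childless a pb (by rw [← e]; exact hgbpb)
  have hgbB : gb ≠ N.leaf b := by
    intro e
    exact childless b pb (by rw [← e]; exact hgbpb)
  have hgbnpb : gb ≠ pb := by
    intro e
    exact irr pb (by rw [e] at hgbpb; exact hgbpb)
  have hanv : a ∉ N.visSet gb := by
    intro hvis
    obtain ⟨P, hP⟩ := reach pa
    have hgbP : gb ∉ P := fun hm => hK3 (Network.desc_last_mem hP hm)
    have hmem := hvis (P ++ [N.leaf a]) (Network.path_snoc hP hpa)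
    rcases List.mem_append.mp hmem with hm | hm
    · exact hgbP hm
    · exact hgbA (by simpa using hm)
  have hbnv : b ∉ N.visSet gb := by
    intro hvis
    obtain ⟨P, hP⟩ := reach pa
    have hgbP : gb ∉ P := fun hm => hK3 (Network.desc_last_mem hP hm)
    have hmem := hvis ((P ++ [pb]) ++ [N.leaf b])
      (Network.path_snoc (Network.path_snoc hP hpapb) hpb)
    rcases List.mem_append.mp hmem with hm | hm
    · rcases List.mem_append.mp hm with hm' | hm'
      · exact hgbP hm'
      · exact hgbnpb (by simpa using hm')
    · exact hgbB (by simpa using hm)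
  have hca : c ≠ a := by
    intro e
    rw [e] at hc
    exact hanv hc
  have hcb : c ≠ b := by
    intro e
    rw [e] at hc
    exact hbnv hc
  have hCnd : ¬ N.Desc pa (N.leaf c) := by
    intro hdes
    rcases descpa _ hdes with e | e | e | e
    · exact childless c (N.leaf a) (by rw [e]; exact hpa)
    · exact hca (hinj e)
    · exact childless c (N.leaf b) (by rw [e]; exact hpb)
    · exact hcb (hinj e)
  have desc_to_pa : ∀ v, N.Desc v (N.leaf a) → v = N.leaf a ∨ N.Desc v pa := by
    intro v hv
    by_cases he : v = N.leaf a
    · exact Or.inl he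
    · right
      obtain ⟨l, hl⟩ := Network.path_of_desc hv
      obtain ⟨l', w, hl', hw, _⟩ := Network.path_decomp hl (Ne.symm he)
      have hwpa : w = pa := Aparent w hw
      rw [hwpa] at hl'
      exact Network.desc_of_path hl'
  have freshB : ∀ {m : List N.V} {u t : N.V}, N.IsPathFromTo m u t → t ≠ N.leaf b →
      N.leaf b ∉ m := by
    intro m u t hm ht hmem
    obtain ⟨z, _, hz2⟩ := Network.succ_of_mem hm hmem (Ne.symm ht)
    exact childless b z hz2
  have freshpb : ∀ {m : List N.V} {u t : N.V}, N.IsPathFromTo m u t → t ≠ pb →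
      t ≠ N.leaf b → pb ∉ m := by
    intro m u t hm ht1 ht2 hmem
    obtain ⟨z, hz1, hz2⟩ := Network.succ_of_mem hm hmem (Ne.symm ht1)
    have hzB : z = N.leaf b := pbchild z hz2
    rw [hzB] at hz1
    exact freshB hm ht2 hz1
  -- reduction: a display of ax|c yields a display of ax|b
  have hred : N.Displays a x c → N.Displays a x b := by
    rintro ⟨hax', hac', hxc', p, q, l0, lA, lX, lC, hpq, h0, hA, hXp, hC, hAX, h0AX, hzall⟩
    have hqpb : q ≠ pb := by
      intro e
      rw [e] at hA
      rcases descpb _ (Network.desc_of_path hA) with e' | e'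
      · exact hApb e'
      · exact hab (hinj e')
    have hqB : q ≠ N.leaf b := by
      intro e
      rw [e] at hA
      exact hab (hinj (descB _ (Network.desc_of_path hA)))
    have hXpb : N.leaf x ≠ pb := by
      intro e
      exact childless x (N.leaf b) (by rw [e]; exact hpb)
    have hXB : N.leaf x ≠ N.leaf b := fun e => hxb (hinj e)
    have hAB : N.leaf a ≠ N.leaf b := fun e => hab (hinj e)
    obtain ⟨R, hR⟩ := reach p
    have hfull := Network.path_append' hR hC
    have hgbfull : gb ∈ R ++ lC.tail := hc _ hfull
    have hgbC : gb ∈ lC := by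
      rcases List.mem_append.mp hgbfull with h1 | h2
      · exfalso
        have hgp : N.Desc gb p := Network.desc_last_mem hR h1
        have hgA : N.Desc gb (N.leaf a) :=
          (hgp.trans (Network.desc_of_path h0)).trans (Network.desc_of_path hA)
        rcases desc_to_pa gb hgA with e | e
        · exact hgbA e
        · exact hK3 e
      · exact List.mem_of_mem_tail h2
    obtain ⟨l₁, hl₁, hsub₁⟩ := Network.prefix_path lC p (N.leaf c) gb hC hgbC
    have hpbl0 : pb ∉ l0 := freshpb h0 hqpb hqB
    have hBl0 : N.leaf b ∉ l0 := freshB h0 hqB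
    have hpblA : pb ∉ lA := freshpb hA hApb hAB
    have hBlA : N.leaf b ∉ lA := freshB hA hAB
    have hpblX : pb ∉ lX := freshpb hXp hXpb hXB
    have hBlX : N.leaf b ∉ lX := freshB hXp hXB
    refine ⟨hax', hab, hxb, p, q, l0, lA, lX, (l₁ ++ [pb]) ++ [N.leaf b], hpq, h0, hA, hXp,
      Network.path_snoc (Network.path_snoc hl₁ hgbpb) hpb, hAX, h0AX, ?_⟩
    intro v hv hmem
    rcases List.mem_append.mp hv with hv1 | hv2
    · rcases List.mem_append.mp hv1 with hv3 | hv4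
      · exact hzall v (hsub₁ v hv3) hmem
      · exfalso
        have hvpb : v = pb := by simpa using hv4
        rw [hvpb] at hmem
        rcases hmem with hm | hm | hm
        exacts [hpbl0 hm, hpblA hm, hpblX hm]
    · exfalso
      have hvB : v = N.leaf b := by simpa using hv2
      rw [hvB] at hmem
      rcases hmem with hm | hm | hm
      exacts [hBl0 hm, hBlA hm, hBlX hm]
  by_cases hparoot : pa = N.root
  · -- pa is the root: then ac|x cannot be displayed at all, contradicting hd.
    exfalso
    obtain ⟨_, _, _, p₁, q₁, l0, lA, lC, lz, hpq, h0, hA, hC, hz, hAC, h0AC, hzall⟩ :=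
      hd x hxv hxa hxb
    have hq₁pa : q₁ ≠ pa := by
      intro e
      rw [e] at hA hC
      exact hCnd (Network.desc_of_path hC)
    have hq₁A : q₁ ≠ N.leaf a := by
      intro e
      rw [e] at hC
      exact hca (hinj (descA _ (Network.desc_of_path hC)))
    obtain ⟨z, hz1, hz2⟩ := Network.pred_of_mem hA (Network.last_mem_path hA) (Ne.symm hq₁A)
    have hzpa : z = pa := Aparent z hz2
    rw [hzpa] at hz1
    obtain ⟨z₂, _, hz₂2⟩ := Network.pred_of_mem hA hz1 (Ne.symm hq₁pa)
    rw [hparoot] at hz₂2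
    exact noRootParent z₂ hz₂2
  · have patree : N.IsTreeVertex pa := hpaclass.resolve_left hparoot
    obtain ⟨fs, hfs⟩ := Set.ncard_eq_one.mp patree.1
    have hfpa : N.arc fs pa := by
      have : fs ∈ N.parents pa := by rw [hfs]; exact rfl
      exact this
    have hfuniq : ∀ u, N.arc u pa → u = fs := by
      intro u hu
      have hm : u ∈ N.parents pa := hu
      rw [hfs] at hm
      exact Set.mem_singleton_iff.mp hm
    -- key lemma: if every root-path to the leaf labelled y passes through fs,
    -- then N cannot display ac|y.
    have T1 : ∀ y : X, (∀ l, N.IsPathFromTo l N.root (N.leaf y) → fs ∈ l) →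
        y ∉ N.visSet gb → y ≠ a → y ≠ b → False := by
      intro y hyf hy1 hy2 hy3
      obtain ⟨_, _, _, p₁, q₁, l0, lA, lC, lz, hpq, h0, hA, hC, hz, hAC, h0AC, hzall⟩ :=
        hd y hy1 hy2 hy3
      have hq₁pa : q₁ ≠ pa := by
        intro e
        rw [e] at hC
        exact hCnd (Network.desc_of_path hC)
      have hq₁A : q₁ ≠ N.leaf a := by
        intro e
        rw [e] at hC
        exact hca (hinj (descA _ (Network.desc_of_path hC)))
      obtain ⟨z, hz1, hz2⟩ := Network.pred_of_mem hA (Network.last_mem_path hA) (Ne.symm hq₁A)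
      have hzpa : z = pa := Aparent z hz2
      rw [hzpa] at hz1
      obtain ⟨z₂, hz₂1, hz₂2⟩ := Network.pred_of_mem hA hz1 (Ne.symm hq₁pa)
      have hz₂f : z₂ = fs := hfuniq z₂ hz₂2
      rw [hz₂f] at hz₂1
      obtain ⟨R, hR⟩ := reach p₁
      have hfull := Network.path_append' hR hz
      have hfsfull : fs ∈ R ++ lz.tail := hyf _ hfull
      rcases List.mem_append.mp hfsfull with hm | hm
      · have d1 : N.Desc fs p₁ := Network.desc_last_mem hR hm
        have d3 : N.Desc q₁ fs := Network.desc_head_mem hA hz₂1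
        have e1 : q₁ = fs := antisym d3 (d1.trans (Network.desc_of_path h0))
        refine hpq (antisym (Network.desc_of_path h0) ?_)
        rw [e1]
        exact d1
      · have hmlz : fs ∈ lz := List.mem_of_mem_tail hm
        have hfp : fs = p₁ := hzall fs hmlz (Or.inr (Or.inl hz₂1))
        refine hpq (antisym (Network.desc_of_path h0) ?_)
        rw [← hfp]
        exact Network.desc_head_mem hA hz₂1
    have hfnr : ¬ N.IsRetic fs := fun hr => hnear.2 fs pb ⟨hr, hretic, pa, hfpa, patree, hpapb⟩
    have hfclass : fs = N.root ∨ N.IsTreeVertex fs := by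
      rcases hclass fs with h' | ⟨y, hy⟩ | h' | h'
      · exact Or.inl h'
      · exact absurd (by rw [hy]; exact hfpa) (childless y pa)
      · exact Or.inr h'
      · exact absurd h' hfnr
    have hfch2 : (N.children fs).ncard = 2 := by
      rcases hfclass with h' | h'
      · rw [h']; exact hrout
      · exact h'.2
    by_cases hfgb : N.arc fs gb
    · -- fs is the common parent of pa and gb: refute ax|b directly.
      have hnaxb : ¬ N.Displays a x b := by
        rintro ⟨_, _, _, p, q, l0, lA, lX, lB, hpq, h0, hA, hXp, hB, hAX, h0AX, hzall⟩
        have hqA : q ≠ N.leaf a := by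
          intro e
          rw [e] at hXp
          exact hxa (hinj (descA _ (Network.desc_of_path hXp)))
        have hqpa : q ≠ pa := by
          intro e
          rw [e] at hXp
          rcases descpa _ (Network.desc_of_path hXp) with e' | e' | e' | e'
          · exact childless x (N.leaf a) (by rw [e']; exact hpa)
          · exact hxa (hinj e')
          · exact childless x (N.leaf b) (by rw [e']; exact hpb)
          · exact hxb (hinj e')
        have hqpb : q ≠ pb := by
          intro e
          rw [e] at hXp
          rcases descpb _ (Network.desc_of_path hXp) with e' | e'
          · exact childless x (N.leaf b) (by rw [e']; exact hpb)
          · exact hxb (hinj e')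
        have hqB : q ≠ N.leaf b := by
          intro e
          rw [e] at hXp
          exact hxb (hinj (descB _ (Network.desc_of_path hXp)))
        -- pa and fs lie on the path to the leaf a
        obtain ⟨z, hz1, hz2⟩ := Network.pred_of_mem hA (Network.last_mem_path hA) (Ne.symm hqA)
        have hzpa : z = pa := Aparent z hz2
        rw [hzpa] at hz1
        obtain ⟨z₂, hz₂1, hz₂2⟩ := Network.pred_of_mem hA hz1 (Ne.symm hqpa)
        have hz₂f : z₂ = fs := hfuniq z₂ hz₂2
        rw [hz₂f] at hz₂1
        -- pb and then gb lie on the path to the leaf b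
        have hpB : p ≠ N.leaf b := by
          intro e
          rw [e] at h0
          exact hqB (descB _ (Network.desc_of_path h0))
        obtain ⟨z₃, hz₃1, hz₃2⟩ := Network.pred_of_mem hB (Network.last_mem_path hB) (Ne.symm hpB)
        have hz₃pb : z₃ = pb := Bparent z₃ hz₃2
        rw [hz₃pb] at hz₃1
        have hppb : p ≠ pb := by
          intro e
          rw [e] at h0
          rcases descpb _ (Network.desc_of_path h0) with e' | e'
          · exact hqpb e'
          · exact hqB e'
        obtain ⟨z₄, hz₄1, hz₄2⟩ := Network.pred_of_mem hB hz₃1 (Ne.symm hppb)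
        rcases pbparent z₄ hz₄2 with e4 | e4
        · -- the predecessor of pb on the b-path is pa : impossible
          rw [e4] at hz₄1
          have hppa : pa = p := hzall pa hz₄1 (Or.inr (Or.inl hz1))
          have hdpaq : N.Desc pa q := by rw [hppa]; exact Network.desc_of_path h0
          rcases descpa q hdpaq with e' | e' | e' | e'
          exacts [hqpa e', hqA e', hqpb e', hqB e']
        · -- the predecessor is gb
          rw [e4] at hz₄1
          have hgbp : gb ≠ p := by
            intro e
            rw [← e] at h0
            exact hK3 ((Network.desc_of_path h0).trans (Network.desc_head_mem hA hz1))
          obtain ⟨z₅, hz₅1, hz₅2⟩ := Network.pred_of_mem hB hz₄1 hgbp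
          have hgbtree : N.IsTreeVertex gb := by
            rcases gbtree with h' | h'
            · exact h'
            · exfalso
              rw [h'] at hfgb
              exact noRootParent fs hfgb
          have hz₅f : z₅ = fs := uniqP hgbtree.1 hfgb hz₅2
          rw [hz₅f] at hz₅1
          have hfp : fs = p := hzall fs hz₅1 (Or.inr (Or.inl hz₂1))
          have hfsl0 : fs ∈ l0 := by rw [hfp]; exact Network.head_mem_path h0
          have hfsq : fs ≠ q := by rw [hfp]; exact hpq
          obtain ⟨z₆, hz₆1, hz₆2⟩ := Network.succ_of_mem h0 hfsl0 hfsq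
          rcases pairC hfch2 hfpa hfgb (Ne.symm hgbpa) z₆ hz₆2 with e6 | e6
          · rw [e6] at hz₆1
            exact hqpa (h0AX pa hz₆1 (Or.inl hz1)).symm
          · rw [e6] at hz₆1
            have hgbp' : gb = p := hzall gb hz₄1 (Or.inl hz₆1)
            have hgbfs : gb = fs := hgbp'.trans hfp.symm
            rw [hgbfs] at hfgb
            exact irr fs hfgb
      exact ⟨fun h' => hnaxb (hred h'), hnaxb⟩
    · exfalso
      rcases hfclass with hfroot | hftree
      · -- fs is the root: T1 applies to x itself.
        refine T1 x ?_ hxv hxa hxb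
        intro l hl
        rw [hfroot]
        exact Network.head_mem_path hl
      · -- fs is a tree vertex: descend from its other child to a leaf visible
        -- through fs and avoiding gb, then apply T1.
        have chainlem :
            ∀ v : N.V, (N.IsTreeVertex v ∨ ∃ y, N.leaf y = v) → v ≠ pa → v ≠ N.leaf a →
              v ≠ N.leaf b → v ≠ fs → N.Desc fs v →
              (∀ l, N.IsPathFromTo l N.root v → fs ∈ l) →
              (∃ l, N.IsPathFromTo l N.root v ∧ gb ∉ l) → False := fun v =>
          WellFounded.induction wf_desc
            (C := fun v => (N.IsTreeVertex v ∨ ∃ y, N.leaf y = v) → v ≠ pa → v ≠ N.leaf a →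
              v ≠ N.leaf b → v ≠ fs → N.Desc fs v →
              (∀ l, N.IsPathFromTo l N.root v → fs ∈ l) →
              (∃ l, N.IsPathFromTo l N.root v ∧ gb ∉ l) → False)
            v (by
              intro w IH hclv hvpa hvA hvB hvf hdfv hall hex
              rcases hclv with htv | ⟨y, hy⟩
              · -- tree vertex: descend to a suitable child
                have hch2 := htv.2
                have step : ∀ v', N.arc w v' → v' ≠ gb → ¬ N.IsRetic v' → False := by
                  intro v' hvv' hvgb' hnr
                  have hv'root : v' ≠ N.root := by
                    intro e
                    rw [e] at hvv'
                    exact noRootParent w hvv'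
                  have hcl' : N.IsTreeVertex v' ∨ ∃ y, N.leaf y = v' := by
                    rcases hclass v' with h' | h' | h' | h'
                    · exact absurd h' hv'root
                    · exact Or.inr h'
                    · exact Or.inl h'
                    · exact absurd h' hnr
                  have hpar1 : (N.parents v').ncard = 1 := by
                    rcases hcl' with h' | ⟨y₁, hy₁⟩
                    · exact h'.1
                    · rw [← hy₁]; exact (hleafv y₁).1
                  refine IH v' (Relation.TransGen.single hvv') hcl' ?_ ?_ ?_ ?_ ?_ ?_ ?_
                  · intro e
                    rw [e] at hvv'
                    exact hvf (hfuniq w hvv')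
                  · intro e
                    rw [e] at hvv'
                    exact hvpa (Aparent w hvv')
                  · intro e
                    rw [e] at hvv'
                    have hwpb : w = pb := Bparent w hvv'
                    have h1 := htv.1
                    rw [hwpb] at h1
                    have h2 := hretic.1
                    omega
                  · intro e
                    rw [e] at hvv'
                    exact hacy fs (Relation.TransGen.tail' hdfv hvv')
                  · exact hdfv.tail hvv'
                  · intro l hl
                    obtain ⟨z, hz1, hz2⟩ :=
                      Network.pred_of_mem hl (Network.last_mem_path hl) hv'root
                    have hzw : z = w := uniqP hpar1 hvv' hz2
                    rw [hzw] at hz1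
                    obtain ⟨l', hl', hsub⟩ := Network.prefix_path l N.root v' w hl hz1
                    exact hsub fs (hall l' hl')
                  · obtain ⟨l, hl, hgbl⟩ := hex
                    refine ⟨l ++ [v'], Network.path_snoc hl hvv', ?_⟩
                    intro hm
                    rcases List.mem_append.mp hm with hm' | hm'
                    · exact hgbl hm'
                    · have hgv : gb = v' := by simpa using hm'
                      exact hvgb' hgv.symm
                obtain ⟨c₁, c₂, hc12, hcset⟩ := Set.ncard_eq_two.mp hch2
                have hc₁ : N.arc w c₁ := by
                  have : c₁ ∈ N.children w := by rw [hcset]; exact Set.mem_insert _ _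
                  exact this
                obtain ⟨tc, htc, htccl⟩ := hn.1 w ⟨c₁, hc₁⟩
                by_cases htcgb : tc = gb
                · -- w is the (unique) parent of gb; take the other child of w
                  have hwgb : N.arc w gb := by rw [← htcgb]; exact htc
                  have hgbtree : N.IsTreeVertex gb := by
                    rcases gbtree with h' | h'
                    · exact h'
                    · exfalso
                      rw [h'] at hwgb
                      exact noRootParent w hwgb
                  obtain ⟨w₂, hww₂, hw₂gb, _⟩ := otherC hch2 hwgb
                  have hw₂pb : w₂ ≠ pb := by
                    intro e
                    rw [e] at hww₂
                    rcases pbparent w hww₂ with e' | e'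
                    · exact hvpa e'
                    · rw [e'] at hwgb
                      exact irr gb hwgb
                  have hw₂nr : ¬ N.IsRetic w₂ := fun hr =>
                    hnear.1 pb w₂ ⟨Ne.symm hw₂pb, hretic, hr, w, gb, htv, hgbtree, hwgb, hww₂,
                      hgbpb⟩
                  exact step w₂ hww₂ hw₂gb hw₂nr
                · have htcnr : ¬ N.IsRetic tc := by
                    rcases htccl with h' | h'
                    · intro hr
                      have h1 := h'.1
                      have h2 := hr.1
                      omega
                    · intro hr
                      have h1 := h'.1
                      have h2 := hr.1
                      omega
                  exact step tc htc htcgb htcnr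
              · -- leaf: apply T1
                have hall' : ∀ l, N.IsPathFromTo l N.root (N.leaf y) → fs ∈ l := by
                  intro l hl
                  refine hall l ?_
                  rw [hy] at hl
                  exact hl
                refine T1 y hall' ?_ ?_ ?_
                · intro hvis
                  obtain ⟨l, hl, hgbl⟩ := hex
                  refine hgbl (hvis l ?_)
                  rw [hy]
                  exact hl
                · intro e
                  rw [e] at hy
                  exact hvA hy.symm
                · intro e
                  rw [e] at hy
                  exact hvB hy.symm)
        -- the other child of fs
        obtain ⟨w', hfw', hw'pa, _⟩ := otherC hfch2 hfpa
        have hw'gb : w' ≠ gb := by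
          intro e
          rw [e] at hfw'
          exact hfgb hfw'
        have hw'pb : pb ≠ w' := by
          intro e
          rw [← e] at hfw'
          rcases pbparent fs hfw' with e' | e'
          · rw [e'] at hfpa
            exact irr pa hfpa
          · rw [e'] at hfpa
            exact hK3 (Relation.ReflTransGen.single hfpa)
        have hw'nr : ¬ N.IsRetic w' := fun hr =>
          hnear.1 pb w' ⟨hw'pb, hretic, hr, fs, pa, hftree, patree, hfpa, hfw', hpapb⟩
        have hw'root : w' ≠ N.root := by
          intro e
          rw [e] at hfw'
          exact noRootParent fs hfw'
        have hw'cl : N.IsTreeVertex w' ∨ ∃ y, N.leaf y = w' := by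
          rcases hclass w' with h' | h' | h' | h'
          · exact absurd h' hw'root
          · exact Or.inr h'
          · exact Or.inl h'
          · exact absurd h' hw'nr
        have hw'par1 : (N.parents w').ncard = 1 := by
          rcases hw'cl with h' | ⟨y₁, hy₁⟩
          · exact h'.1
          · rw [← hy₁]; exact (hleafv y₁).1
        obtain ⟨Rf, hRf⟩ := reach fs
        have hgbRf : gb ∉ Rf := fun hm => hK3 ((Network.desc_last_mem hRf hm).tail hfpa)
        refine chainlem w' hw'cl hw'pa ?_ ?_ ?_ (Relation.ReflTransGen.single hfw') ?_ ?_
        · intro e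
          rw [e] at hfw'
          have e' : fs = pa := Aparent fs hfw'
          rw [e'] at hfpa
          exact irr pa hfpa
        · intro e
          rw [e] at hfw'
          have e' : fs = pb := Bparent fs hfw'
          have h1 := hftree.1
          rw [e'] at h1
          have h2 := hretic.1
          omega
        · intro e
          rw [e] at hfw'
          exact irr fs hfw'
        · intro l hl
          obtain ⟨z, hz1, hz2⟩ :=
            Network.pred_of_mem hl (Network.last_mem_path hl) hw'root
          have hzf : z = fs := uniqP hw'par1 hfw' hz2
          rw [hzf] at hz1
          exact hz1
        · refine ⟨Rf ++ [w'], Network.path_snoc hRf hfw', ?_⟩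
          intro hm
          rcases List.mem_append.mp hm with hm' | hm'
          · exact hgbRf hm'
          · have hgv : gb = w' := by simpa using hm'
            exact hw'gb hgv.symm
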